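/- Define p(r) = ∫_{γ₁}^{∞} ∫_{γ₂}^{∞} g(x,y;r) dx dy, where g is the standard bivariate Gaussian density with correlation r ∈ (-1,1) and γ₁, γ₂ > 0 are fixed. Then p is differentiable on (-1,1) with p'(r) = g(γ₁, γ₂; r). -/

import Mathlib

open MeasureTheory Real
open Filter

/-- The standard bivariate Gaussian density with correlation `ρ`. -/
noncomputable def bivGauss (x y ρ : ℝ) : ℝ :=
  (1 / (2 * Real.pi * Real.sqrt (1 - ρ ^ 2))) *
    Real.exp (-(x ^ 2 + y ^ 2 - 2 * ρ * x * y) / (2 * (1 - ρ ^ 2)))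

noncomputable def bnd (a x : ℝ) : ℝ := (1 + 2 * x ^ 2) * Real.exp (-((1 - a) / 2) * x ^ 2)

lemma bnd_nonneg (a x : ℝ) : 0 ≤ bnd a x := by unfold bnd; positivity

lemma bnd_integrable {a : ℝ} (ha : a < 1) : Integrable (bnd a) := by
  have hb : 0 < (1 - a) / 2 := by linarith
  have h1 : Integrable (fun x : ℝ => Real.exp (-((1 - a) / 2) * x ^ 2)) :=
    integrable_exp_neg_mul_sq hb
  have h2 : Integrable (fun x : ℝ => x ^ 2 * Real.exp (-((1 - a) / 2) * x ^ 2)) := by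
    have h := integrable_rpow_mul_exp_neg_mul_sq hb (s := 2) (by norm_num)
    refine h.congr (Filter.Eventually.of_forall fun x => ?_)
    simp [Real.rpow_two]
  refine (h1.add (h2.const_mul 2)).congr (Filter.Eventually.of_forall fun x => ?_)
  simp only [Pi.add_apply]
  unfold bnd; ring

lemma bnd_tendsto {a : ℝ} (ha : a < 1) : Tendsto (bnd a) atTop (nhds 0) := by
  have hb : 0 < (1 - a) / 2 := by linarith
  have hsq : Tendsto (fun y : ℝ => ((1 - a) / 2) * y ^ 2) atTop atTop :=
    (tendsto_pow_atTop (two_ne_zero)).const_mul_atTop hb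
  have h1 : Tendsto (fun y : ℝ => Real.exp (-(((1 - a) / 2) * y ^ 2))) atTop (nhds 0) :=
    Real.tendsto_exp_neg_atTop_nhds_zero.comp hsq
  have h2 : Tendsto (fun y : ℝ => (((1 - a) / 2) * y ^ 2) *
      Real.exp (-(((1 - a) / 2) * y ^ 2))) atTop (nhds 0) := by
    have h := Real.tendsto_pow_mul_exp_neg_atTop_nhds_zero 1
    simpa [Function.comp_def] using h.comp hsq
  have h3 := h1.add (h2.const_mul (2 / ((1 - a) / 2)))
  have h4 : Tendsto (fun y : ℝ => Real.exp (-(((1 - a) / 2) * y ^ 2)) +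
      (2 / ((1 - a) / 2)) * ((((1 - a) / 2) * y ^ 2) * Real.exp (-(((1 - a) / 2) * y ^ 2))))
      atTop (nhds 0) := by
    have := h1.add ((h2.const_mul (2 / ((1 - a) / 2))))
    simpa using this
  refine h4.congr fun y => ?_
  have hbne : ((1 - a) / 2 : ℝ) ≠ 0 := ne_of_gt hb
  rw [show 2 / ((1 - a) / 2) * ((1 - a) / 2 * y ^ 2 * Real.exp (-((1 - a) / 2 * y ^ 2)))
      = 2 / ((1 - a) / 2) * ((1 - a) / 2) * (y ^ 2 * Real.exp (-((1 - a) / 2 * y ^ 2))) by ring,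
    div_mul_cancel₀ _ hbne]
  unfold bnd
  rw [neg_mul]
  ring

namespace S6

noncomputable def gA (x y ρ : ℝ) : ℝ :=
  bivGauss x y ρ * ((ρ * y - x) / (1 - ρ ^ 2))

noncomputable def gP (x y ρ : ℝ) : ℝ :=
  bivGauss x y ρ * (((ρ * y - x) * (ρ * x - y) + ρ * (1 - ρ ^ 2)) / (1 - ρ ^ 2) ^ 2)

lemma hasDerivAt_biv_x (y ρ : ℝ) (hs : 0 < 1 - ρ ^ 2) (x : ℝ) :
    HasDerivAt (fun x => bivGauss x y ρ) (gA x y ρ) x := by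
  have h1 : HasDerivAt (fun x : ℝ => x ^ 2 + y ^ 2 - 2 * ρ * x * y) (2 * x - 2 * ρ * y) x := by
    have e : (fun x : ℝ => x ^ 2 + y ^ 2 - 2 * ρ * x * y)
        = fun x : ℝ => x ^ 2 + y ^ 2 - 2 * ρ * y * x := by ext t; ring
    rw [e]
    have := ((hasDerivAt_pow 2 x).add_const (y ^ 2)).sub ((hasDerivAt_id x).const_mul (2 * ρ * y))
    refine this.congr_deriv (Eq.symm ?_)
    simp
  have h2 := ((h1.neg.div_const (2 * (1 - ρ ^ 2))).exp.const_mul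
      (1 / (2 * Real.pi * Real.sqrt (1 - ρ ^ 2))))
  refine h2.congr_deriv (Eq.symm ?_)
  simp only [gA, bivGauss, Pi.neg_apply]
  have hne : (1 - ρ ^ 2) ≠ 0 := ne_of_gt hs
  field_simp
  ring

lemma hasDerivAt_gA_y (x ρ : ℝ) (hs : 0 < 1 - ρ ^ 2) (y : ℝ) :
    HasDerivAt (fun y => gA x y ρ) (gP x y ρ) y := by
  have hne : (1 - ρ ^ 2) ≠ 0 := ne_of_gt hs
  have h1 : HasDerivAt (fun y : ℝ => x ^ 2 + y ^ 2 - 2 * ρ * x * y) (2 * y - 2 * ρ * x) y := by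
    have e : (fun y : ℝ => x ^ 2 + y ^ 2 - 2 * ρ * x * y)
        = fun y : ℝ => (y ^ 2 + x ^ 2) - 2 * ρ * x * y := by ext t; ring
    rw [e]
    have := ((hasDerivAt_pow 2 y).add_const (x ^ 2)).sub ((hasDerivAt_id y).const_mul (2 * ρ * x))
    refine this.congr_deriv (Eq.symm ?_)
    simp
  have hexp := ((h1.neg.div_const (2 * (1 - ρ ^ 2))).exp.const_mul
      (1 / (2 * Real.pi * Real.sqrt (1 - ρ ^ 2))))
  -- hexp : HasDerivAt (fun y => bivGauss x y ρ) (c * (exp(..) * (-(2y-2ρx)/(2s)))) y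
  have hlin : HasDerivAt (fun y : ℝ => (ρ * y - x) / (1 - ρ ^ 2)) (ρ / (1 - ρ ^ 2)) y := by
    have := (((hasDerivAt_id y).const_mul ρ).sub_const x).div_const (1 - ρ ^ 2)
    refine this.congr_deriv (Eq.symm ?_)
    simp
  have h2 := hexp.mul hlin
  refine h2.congr_deriv (Eq.symm ?_)
  simp only [gP, gA, bivGauss, Pi.neg_apply]
  field_simp
  ring

end S6
namespace S6
lemma hasDerivAt_biv_rho (x y : ℝ) {ρ : ℝ} (hs : 0 < 1 - ρ ^ 2) :
    HasDerivAt (fun ρ => bivGauss x y ρ) (gP x y ρ) ρ := by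
  have hne : (1 - ρ ^ 2) ≠ 0 := ne_of_gt hs
  have hqpos : 0 < Real.sqrt (1 - ρ ^ 2) := Real.sqrt_pos.2 hs
  have hqne : Real.sqrt (1 - ρ ^ 2) ≠ 0 := ne_of_gt hqpos
  have hq2 : Real.sqrt (1 - ρ ^ 2) ^ 2 = 1 - ρ ^ 2 := Real.sq_sqrt hs.le
  have hpi : (2 : ℝ) * Real.pi ≠ 0 := by positivity
  have h0 : HasDerivAt (fun ρ : ℝ => 1 - ρ ^ 2) (-(2 * ρ)) ρ := by
    simpa using (hasDerivAt_pow 2 ρ).const_sub 1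
  -- derivative of the constant factor
  have hq : HasDerivAt (fun ρ : ℝ => Real.sqrt (1 - ρ ^ 2))
      (1 / (2 * Real.sqrt (1 - ρ ^ 2)) * (-(2 * ρ))) ρ :=
    (Real.hasDerivAt_sqrt hne).comp ρ h0
  have hden : HasDerivAt (fun ρ : ℝ => 2 * Real.pi * Real.sqrt (1 - ρ ^ 2))
      (2 * Real.pi * (1 / (2 * Real.sqrt (1 - ρ ^ 2)) * (-(2 * ρ)))) ρ := hq.const_mul _
  have hdnz : 2 * Real.pi * Real.sqrt (1 - ρ ^ 2) ≠ 0 := by positivity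
  have hc : HasDerivAt (fun ρ : ℝ => 1 / (2 * Real.pi * Real.sqrt (1 - ρ ^ 2)))
      ((1 / (2 * Real.pi * Real.sqrt (1 - ρ ^ 2))) * (ρ / (1 - ρ ^ 2))) ρ := by
    have := (hasDerivAt_const ρ (1:ℝ)).div hden hdnz
    refine this.congr_deriv (Eq.symm ?_)
    field_simp
    linear_combination ρ * hq2
  -- derivative of the exponent
  have hN : HasDerivAt (fun ρ : ℝ => x ^ 2 + y ^ 2 - 2 * ρ * x * y) (-(2 * x * y)) ρ := by
    have e : (fun ρ : ℝ => x ^ 2 + y ^ 2 - 2 * ρ * x * y)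
        = fun ρ : ℝ => x ^ 2 + y ^ 2 - (2 * x * y) * ρ := by ext t; ring
    rw [e]
    simpa using ((hasDerivAt_id ρ).const_mul (2 * x * y)).const_sub (x ^ 2 + y ^ 2)
  have hden2 : HasDerivAt (fun ρ : ℝ => 2 * (1 - ρ ^ 2)) (2 * (-(2 * ρ))) ρ := h0.const_mul 2
  have hdnz2 : 2 * (1 - ρ ^ 2) ≠ 0 := by positivity
  have hE : HasDerivAt (fun ρ : ℝ => -(x ^ 2 + y ^ 2 - 2 * ρ * x * y) / (2 * (1 - ρ ^ 2)))
      ((x * y * (1 - ρ ^ 2) - ρ * (x ^ 2 + y ^ 2 - 2 * ρ * x * y)) / (1 - ρ ^ 2) ^ 2) ρ := by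
    have := (hN.neg).div hden2 hdnz2
    refine this.congr_deriv (Eq.symm ?_)
    simp only [Pi.neg_apply]
    field_simp
  have h2 := hc.mul hE.exp
  refine h2.congr_deriv (Eq.symm ?_)
  simp only [gP, bivGauss]
  field_simp
  ring
end S6

namespace S6

lemma biv_nonneg (x y ρ : ℝ) : 0 ≤ bivGauss x y ρ := by
  unfold bivGauss; positivity

lemma sq_lt {a ρ : ℝ} (ha1 : a < 1) (hρ : |ρ| ≤ a) : ρ ^ 2 ≤ a ^ 2 := by
  have := abs_nonneg ρ
  nlinarith [sq_abs ρ, pow_le_pow_left₀ (abs_nonneg ρ) hρ 2]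

lemma biv_le {a ρ : ℝ} (ha1 : a < 1) (hρ : |ρ| ≤ a) (x y : ℝ) :
    bivGauss x y ρ ≤ (1 / (2 * Real.pi * Real.sqrt (1 - a ^ 2))) *
      (Real.exp (-((1 - a) / 2) * x ^ 2) * Real.exp (-((1 - a) / 2) * y ^ 2)) := by
  have ha0 : 0 ≤ a := le_trans (abs_nonneg ρ) hρ
  have hρ2 : ρ ^ 2 ≤ a ^ 2 := sq_lt ha1 hρ
  have hsa : 0 < 1 - a ^ 2 := by nlinarith
  have hs : 0 < 1 - ρ ^ 2 := by nlinarith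
  have hqa : 0 < Real.sqrt (1 - a ^ 2) := Real.sqrt_pos.2 hsa
  have hcle : 1 / (2 * Real.pi * Real.sqrt (1 - ρ ^ 2))
      ≤ 1 / (2 * Real.pi * Real.sqrt (1 - a ^ 2)) := by
    apply one_div_le_one_div_of_le (by positivity)
    have := Real.sqrt_le_sqrt (by linarith : 1 - a ^ 2 ≤ 1 - ρ ^ 2)
    nlinarith [Real.pi_pos]
  have hrr := abs_le.1 hρ
  have h2rxy : 2 * ρ * x * y ≤ a * (x ^ 2 + y ^ 2) := by
    nlinarith [mul_nonneg (by linarith : (0:ℝ) ≤ a - ρ) (sq_nonneg (x + y)),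
      mul_nonneg (by linarith : (0:ℝ) ≤ a + ρ) (sq_nonneg (x - y))]
  have hexp : Real.exp (-(x ^ 2 + y ^ 2 - 2 * ρ * x * y) / (2 * (1 - ρ ^ 2)))
      ≤ Real.exp (-((1 - a) / 2) * x ^ 2) * Real.exp (-((1 - a) / 2) * y ^ 2) := by
    rw [← Real.exp_add]
    apply Real.exp_le_exp.2
    rw [div_le_iff₀ (by positivity : (0:ℝ) < 2 * (1 - ρ ^ 2))]
    have hN : (1 - a) * (x ^ 2 + y ^ 2) ≤ x ^ 2 + y ^ 2 - 2 * ρ * x * y := by nlinarith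
    nlinarith [sq_nonneg ρ, sq_nonneg x, sq_nonneg y,
      mul_nonneg (mul_nonneg (by linarith : (0:ℝ) ≤ 1 - a)
        (by positivity : (0:ℝ) ≤ x ^ 2 + y ^ 2)) (sq_nonneg ρ)]
  unfold bivGauss
  exact mul_le_mul hcle hexp (Real.exp_pos _).le (by positivity)

lemma biv_le' {a ρ : ℝ} (ha1 : a < 1) (hρ : |ρ| ≤ a) (x y : ℝ) :
    bivGauss x y ρ ≤ (1 / (2 * Real.pi * Real.sqrt (1 - a ^ 2))) * (bnd a x * bnd a y) := by
  refine (biv_le ha1 hρ x y).trans ?_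
  have ha0 : 0 ≤ a := le_trans (abs_nonneg ρ) hρ
  have hsa : 0 < 1 - a ^ 2 := by nlinarith
  apply mul_le_mul_of_nonneg_left _ (by positivity)
  unfold bnd
  apply mul_le_mul
  · nlinarith [Real.exp_pos (-((1 - a) / 2) * x ^ 2), sq_nonneg x,
      mul_nonneg (sq_nonneg x) (Real.exp_pos (-((1 - a) / 2) * x ^ 2)).le]
  · nlinarith [Real.exp_pos (-((1 - a) / 2) * y ^ 2), sq_nonneg y,
      mul_nonneg (sq_nonneg y) (Real.exp_pos (-((1 - a) / 2) * y ^ 2)).le]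
  · exact (Real.exp_pos _).le
  · positivity

end S6

namespace S6

lemma gP_le {a ρ : ℝ} (ha1 : a < 1) (hρ : |ρ| ≤ a) (x y : ℝ) :
    |gP x y ρ| ≤ (1 / (2 * Real.pi * Real.sqrt (1 - a ^ 2)) / (1 - a ^ 2) ^ 2) *
      (bnd a x * bnd a y) := by
  have ha0 : 0 ≤ a := le_trans (abs_nonneg ρ) hρ
  have hρ2 : ρ ^ 2 ≤ a ^ 2 := sq_lt ha1 hρ
  have hsa : 0 < 1 - a ^ 2 := by nlinarith
  have hs : 0 < 1 - ρ ^ 2 := by nlinarith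
  have hrr := abs_le.1 hρ
  have habs : |gP x y ρ| = bivGauss x y ρ *
      (|(ρ * y - x) * (ρ * x - y) + ρ * (1 - ρ ^ 2)| / (1 - ρ ^ 2) ^ 2) := by
    unfold gP
    rw [abs_mul, abs_of_nonneg (biv_nonneg x y ρ), abs_div,
      abs_of_nonneg (by positivity : (0:ℝ) ≤ (1 - ρ ^ 2) ^ 2)]
  have hnum : |(ρ * y - x) * (ρ * x - y) + ρ * (1 - ρ ^ 2)| ≤ (1 + 2 * x ^ 2) * (1 + 2 * y ^ 2) := by
    have h1 : |ρ * y - x| ≤ |x| + |y| := by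
      calc |ρ * y - x| ≤ |ρ * y| + |x| := abs_sub _ _
        _ ≤ |x| + |y| := by rw [abs_mul]; nlinarith [abs_nonneg y, abs_nonneg x]
    have h2 : |ρ * x - y| ≤ |x| + |y| := by
      calc |ρ * x - y| ≤ |ρ * x| + |y| := abs_sub _ _
        _ ≤ |x| + |y| := by rw [abs_mul]; nlinarith [abs_nonneg x, abs_nonneg y]
    have h3 : |ρ * (1 - ρ ^ 2)| ≤ 1 := by
      rw [abs_mul, abs_of_nonneg hs.le]
      nlinarith [abs_nonneg ρ, sq_abs ρ]
    calc |(ρ * y - x) * (ρ * x - y) + ρ * (1 - ρ ^ 2)|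
        ≤ |(ρ * y - x) * (ρ * x - y)| + |ρ * (1 - ρ ^ 2)| := abs_add_le _ _
      _ ≤ (|x| + |y|) * (|x| + |y|) + 1 := by
          rw [abs_mul]
          exact add_le_add (mul_le_mul h1 h2 (abs_nonneg _) (by positivity)) h3
      _ ≤ (1 + 2 * x ^ 2) * (1 + 2 * y ^ 2) := by
          nlinarith [sq_nonneg (|x| - |y|), sq_abs x, sq_abs y, sq_nonneg (x * y)]
  have hdiv : |(ρ * y - x) * (ρ * x - y) + ρ * (1 - ρ ^ 2)| / (1 - ρ ^ 2) ^ 2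
      ≤ (1 + 2 * x ^ 2) * (1 + 2 * y ^ 2) / (1 - a ^ 2) ^ 2 := by
    apply div_le_div₀ (by positivity) hnum (by positivity)
    exact pow_le_pow_left₀ hsa.le (by linarith) 2
  calc |gP x y ρ| = bivGauss x y ρ *
      (|(ρ * y - x) * (ρ * x - y) + ρ * (1 - ρ ^ 2)| / (1 - ρ ^ 2) ^ 2) := habs
    _ ≤ ((1 / (2 * Real.pi * Real.sqrt (1 - a ^ 2))) *
        (Real.exp (-((1 - a) / 2) * x ^ 2) * Real.exp (-((1 - a) / 2) * y ^ 2))) *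
        ((1 + 2 * x ^ 2) * (1 + 2 * y ^ 2) / (1 - a ^ 2) ^ 2) :=
      mul_le_mul (biv_le ha1 hρ x y) hdiv (by positivity) (by positivity)
    _ = (1 / (2 * Real.pi * Real.sqrt (1 - a ^ 2)) / (1 - a ^ 2) ^ 2) *
        (bnd a x * bnd a y) := by unfold bnd; ring

lemma gA_le {a ρ : ℝ} (ha1 : a < 1) (hρ : |ρ| ≤ a) (x y : ℝ) :
    |gA x y ρ| ≤ (1 / (2 * Real.pi * Real.sqrt (1 - a ^ 2)) / (1 - a ^ 2)) *
      (bnd a x * bnd a y) := by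
  have ha0 : 0 ≤ a := le_trans (abs_nonneg ρ) hρ
  have hρ2 : ρ ^ 2 ≤ a ^ 2 := sq_lt ha1 hρ
  have hsa : 0 < 1 - a ^ 2 := by nlinarith
  have hs : 0 < 1 - ρ ^ 2 := by nlinarith
  have hrr := abs_le.1 hρ
  have habs : |gA x y ρ| = bivGauss x y ρ * (|ρ * y - x| / (1 - ρ ^ 2)) := by
    unfold gA
    rw [abs_mul, abs_of_nonneg (biv_nonneg x y ρ), abs_div, abs_of_nonneg hs.le]
  have hnum : |ρ * y - x| ≤ (1 + 2 * x ^ 2) * (1 + 2 * y ^ 2) := by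
    have h1 : |ρ * y - x| ≤ |x| + |y| := by
      calc |ρ * y - x| ≤ |ρ * y| + |x| := abs_sub _ _
        _ ≤ |x| + |y| := by rw [abs_mul]; nlinarith [abs_nonneg y, abs_nonneg x]
    refine h1.trans ?_
    nlinarith [sq_nonneg (2 * |x| - 1), sq_nonneg (2 * |y| - 1), sq_abs x, sq_abs y,
      mul_nonneg (sq_nonneg x) (sq_nonneg y), abs_nonneg x, abs_nonneg y]
  have hdiv : |ρ * y - x| / (1 - ρ ^ 2)
      ≤ (1 + 2 * x ^ 2) * (1 + 2 * y ^ 2) / (1 - a ^ 2) := by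
    apply div_le_div₀ (by positivity) hnum (by positivity)
    linarith
  calc |gA x y ρ| = bivGauss x y ρ * (|ρ * y - x| / (1 - ρ ^ 2)) := habs
    _ ≤ ((1 / (2 * Real.pi * Real.sqrt (1 - a ^ 2))) *
        (Real.exp (-((1 - a) / 2) * x ^ 2) * Real.exp (-((1 - a) / 2) * y ^ 2))) *
        ((1 + 2 * x ^ 2) * (1 + 2 * y ^ 2) / (1 - a ^ 2)) :=
      mul_le_mul (biv_le ha1 hρ x y) hdiv (by positivity) (by positivity)
    _ = (1 / (2 * Real.pi * Real.sqrt (1 - a ^ 2)) / (1 - a ^ 2)) *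
        (bnd a x * bnd a y) := by unfold bnd; ring

end S6

namespace S6

lemma cont_biv (ρ : ℝ) : Continuous fun z : ℝ × ℝ => bivGauss z.1 z.2 ρ := by
  unfold bivGauss; fun_prop

lemma cont_gA (ρ : ℝ) : Continuous fun z : ℝ × ℝ => gA z.1 z.2 ρ := by
  unfold gA bivGauss; fun_prop

lemma cont_gP (ρ : ℝ) : Continuous fun z : ℝ × ℝ => gP z.1 z.2 ρ := by
  unfold gP bivGauss; fun_prop

lemma tendsto_gA {a ρ : ℝ} (ha1 : a < 1) (hρ : |ρ| ≤ a) (x : ℝ) :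
    Tendsto (fun y => gA x y ρ) atTop (nhds 0) := by
  apply squeeze_zero_norm (a := fun y =>
    (1 / (2 * Real.pi * Real.sqrt (1 - a ^ 2)) / (1 - a ^ 2) * bnd a x) * bnd a y)
  · intro y
    rw [Real.norm_eq_abs]
    calc |gA x y ρ| ≤ _ := gA_le ha1 hρ x y
      _ = _ := by ring
  · simpa using (bnd_tendsto ha1).const_mul
      (1 / (2 * Real.pi * Real.sqrt (1 - a ^ 2)) / (1 - a ^ 2) * bnd a x)

lemma tendsto_biv {a ρ : ℝ} (ha1 : a < 1) (hρ : |ρ| ≤ a) (y : ℝ) :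
    Tendsto (fun x => bivGauss x y ρ) atTop (nhds 0) := by
  apply squeeze_zero_norm (a := fun x =>
    (1 / (2 * Real.pi * Real.sqrt (1 - a ^ 2)) * bnd a y) * bnd a x)
  · intro x
    rw [Real.norm_eq_abs, abs_of_nonneg (biv_nonneg _ _ _)]
    calc bivGauss x y ρ ≤ _ := biv_le' ha1 hρ x y
      _ = _ := by ring
  · simpa using (bnd_tendsto ha1).const_mul
      (1 / (2 * Real.pi * Real.sqrt (1 - a ^ 2)) * bnd a y)

lemma integral_gP_inner {a ρ : ℝ} (ha1 : a < 1) (hρ : |ρ| ≤ a) (γ x : ℝ) :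
    ∫ y in Set.Ioi γ, gP x y ρ = - gA x γ ρ := by
  have ha0 : 0 ≤ a := (abs_nonneg ρ).trans hρ
  have hs : 0 < 1 - ρ ^ 2 := by nlinarith [sq_lt ha1 hρ]
  have hK : Integrable (fun y => (1 / (2 * Real.pi * Real.sqrt (1 - a ^ 2)) / (1 - a ^ 2) ^ 2
      * bnd a x) * bnd a y) := (bnd_integrable ha1).const_mul _
  have hint : IntegrableOn (fun y => gP x y ρ) (Set.Ioi γ) := by
    apply (Integrable.mono' hK ?_ ?_).integrableOn
    · exact ((cont_gP ρ).comp (Continuous.prodMk_right x)).aestronglyMeasurable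
    · refine Filter.Eventually.of_forall fun y => ?_
      rw [Real.norm_eq_abs]
      calc |gP x y ρ| ≤ _ := gP_le ha1 hρ x y
        _ = _ := by ring
  have h := integral_Ioi_of_hasDerivAt_of_tendsto'
    (fun y _ => hasDerivAt_gA_y x ρ hs y) hint (tendsto_gA ha1 hρ x)
  simpa using h

lemma integral_gA_outer {a ρ : ℝ} (ha1 : a < 1) (hρ : |ρ| ≤ a) (γ₁ γ₂ : ℝ) :
    ∫ x in Set.Ioi γ₁, gA x γ₂ ρ = - bivGauss γ₁ γ₂ ρ := by
  have ha0 : 0 ≤ a := (abs_nonneg ρ).trans hρ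
  have hs : 0 < 1 - ρ ^ 2 := by nlinarith [sq_lt ha1 hρ]
  have hK : Integrable (fun x => (1 / (2 * Real.pi * Real.sqrt (1 - a ^ 2)) / (1 - a ^ 2)
      * bnd a γ₂) * bnd a x) := (bnd_integrable ha1).const_mul _
  have hint : IntegrableOn (fun x => gA x γ₂ ρ) (Set.Ioi γ₁) := by
    apply (Integrable.mono' hK ?_ ?_).integrableOn
    · exact ((cont_gA ρ).comp (Continuous.prodMk continuous_id continuous_const)).aestronglyMeasurable
    · refine Filter.Eventually.of_forall fun x => ?_
      rw [Real.norm_eq_abs]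
      calc |gA x γ₂ ρ| ≤ _ := gA_le ha1 hρ x γ₂
        _ = _ := by ring
  have h := integral_Ioi_of_hasDerivAt_of_tendsto'
    (fun x _ => hasDerivAt_biv_x γ₂ ρ hs x) hint (tendsto_biv ha1 hρ γ₂)
  simpa using h

end S6


open S6 in
theorem stmt6 (γ₁ γ₂ : ℝ) (hγ₁ : 0 < γ₁) (hγ₂ : 0 < γ₂) (r : ℝ) (hr₁ : -1 < r) (hr₂ : r < 1) :
    HasDerivAt (fun ρ => ∫ x in Set.Ioi γ₁, ∫ y in Set.Ioi γ₂, bivGauss x y ρ)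
      (bivGauss γ₁ γ₂ r) r := by
  have hr : |r| < 1 := abs_lt.2 ⟨hr₁, hr₂⟩
  set a := (1 + |r|) / 2 with ha_def
  have ha1 : a < 1 := by rw [ha_def]; linarith
  have ha0 : 0 ≤ a := by positivity
  have hra : |r| < a := by rw [ha_def]; linarith
  have hε : 0 < a - |r| := by linarith
  set μ := (volume.restrict (Set.Ioi γ₁)).prod (volume.restrict (Set.Ioi γ₂)) with hμ
  have hball : ∀ ρ ∈ Metric.ball r (a - |r|), |ρ| ≤ a := by
    intro ρ hρ
    rw [Metric.mem_ball, Real.dist_eq] at hρ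
    calc |ρ| = |ρ - r + r| := by norm_num
      _ ≤ |ρ - r| + |r| := abs_add_le _ _
      _ ≤ a := by linarith
  have hbnd_int : Integrable (bnd a) := bnd_integrable ha1
  have hprod : Integrable (fun z : ℝ × ℝ => bnd a z.1 * bnd a z.2) μ :=
    (hbnd_int.restrict).mul_prod (hbnd_int.restrict)
  have hKp : Integrable (fun z : ℝ × ℝ =>
      1 / (2 * Real.pi * Real.sqrt (1 - a ^ 2)) / (1 - a ^ 2) ^ 2 * (bnd a z.1 * bnd a z.2)) μ :=
    hprod.const_mul _
  have hF_meas : ∀ᶠ ρ in nhds r, AEStronglyMeasurable (fun z : ℝ × ℝ => bivGauss z.1 z.2 ρ) μ :=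
    Filter.Eventually.of_forall fun ρ => (cont_biv ρ).aestronglyMeasurable
  have hF_int : Integrable (fun z : ℝ × ℝ => bivGauss z.1 z.2 r) μ := by
    apply Integrable.mono' (hprod.const_mul (1 / (2 * Real.pi * Real.sqrt (1 - a ^ 2))))
      (cont_biv r).aestronglyMeasurable
    refine Filter.Eventually.of_forall fun z => ?_
    rw [Real.norm_eq_abs, abs_of_nonneg (biv_nonneg _ _ _)]
    exact biv_le' ha1 hra.le z.1 z.2
  have hF'_meas : AEStronglyMeasurable (fun z : ℝ × ℝ => gP z.1 z.2 r) μ :=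
    (cont_gP r).aestronglyMeasurable
  have h_bound : ∀ᵐ z ∂μ, ∀ ρ ∈ Metric.ball r (a - |r|), ‖gP z.1 z.2 ρ‖ ≤
      1 / (2 * Real.pi * Real.sqrt (1 - a ^ 2)) / (1 - a ^ 2) ^ 2 * (bnd a z.1 * bnd a z.2) :=
    ae_of_all _ fun z ρ hρ => by
      rw [Real.norm_eq_abs]; exact gP_le ha1 (hball ρ hρ) z.1 z.2
  have h_diff : ∀ᵐ z ∂μ, ∀ ρ ∈ Metric.ball r (a - |r|),
      HasDerivAt (fun ρ => bivGauss z.1 z.2 ρ) (gP z.1 z.2 ρ) ρ :=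
    ae_of_all _ fun z ρ hρ => by
      have h1 := hball ρ hρ
      exact hasDerivAt_biv_rho z.1 z.2 (by nlinarith [sq_lt ha1 h1])
  obtain ⟨hint', hd⟩ := hasDerivAt_integral_of_dominated_loc_of_deriv_le
    (F := fun ρ (z : ℝ × ℝ) => bivGauss z.1 z.2 ρ) (F' := fun ρ (z : ℝ × ℝ) => gP z.1 z.2 ρ)
    (Metric.ball_mem_nhds r hε) hF_meas hF_int hF'_meas h_bound hKp h_diff
  have hrepr : (fun ρ => ∫ x in Set.Ioi γ₁, ∫ y in Set.Ioi γ₂, bivGauss x y ρ)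
      = fun ρ => ∫ z : ℝ × ℝ, bivGauss z.1 z.2 ρ ∂μ := by
    funext ρ
    by_cases h : ρ ^ 2 < 1
    · have hb1 : |ρ| < 1 := by nlinarith [sq_abs ρ, abs_nonneg ρ]
      have h2 : Integrable (fun z : ℝ × ℝ => bnd |ρ| z.1 * bnd |ρ| z.2) μ :=
        ((bnd_integrable hb1).restrict).mul_prod ((bnd_integrable hb1).restrict)
      have hint : Integrable (Function.uncurry fun x y => bivGauss x y ρ) μ := by
        apply Integrable.mono' (h2.const_mul (1 / (2 * Real.pi * Real.sqrt (1 - |ρ| ^ 2))))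
          (cont_biv ρ).aestronglyMeasurable
        refine Filter.Eventually.of_forall fun z => ?_
        show ‖bivGauss z.1 z.2 ρ‖ ≤ _
        rw [Real.norm_eq_abs, abs_of_nonneg (biv_nonneg _ _ _)]
        exact biv_le' hb1 le_rfl z.1 z.2
      exact integral_integral hint
    · have hsq0 : Real.sqrt (1 - ρ ^ 2) = 0 := by
        rw [show (1 - ρ ^ 2 : ℝ) = -(ρ ^ 2 - 1) by ring]
        exact Real.sqrt_eq_zero_of_nonpos (by nlinarith)
      have hz : ∀ x y : ℝ, bivGauss x y ρ = 0 := by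
        intro x y; unfold bivGauss; rw [hsq0]; simp
      simp [hz]
  rw [hrepr]
  have h3 : ∫ z : ℝ × ℝ, gP z.1 z.2 r ∂μ = bivGauss γ₁ γ₂ r := by
    have hint'' : Integrable (Function.uncurry fun x y => gP x y r)
        ((volume.restrict (Set.Ioi γ₁)).prod (volume.restrict (Set.Ioi γ₂))) := hint'
    rw [hμ, ← integral_integral hint'']
    have hin : ∀ x : ℝ, (∫ y in Set.Ioi γ₂, gP x y r) = - gA x γ₂ r :=
      fun x => integral_gP_inner ha1 hra.le γ₂ x
    simp only [hin]
    rw [integral_neg, integral_gA_outer ha1 hra.le γ₁ γ₂, neg_neg]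
  rw [← h3]
  exact hd
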